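/- Let A be an n×n left-circulant matrix with first row (a_0, a_1, ..., a_{n-1}) over the complex numbers. Then det A = (-1)^{(n-1)(n-2)/2} · Π_{l=0}^{n-1} f(θ_l), where f(x) = Σ_{r=0}^{n-1} a_r x^r and θ_0, ..., θ_{n-1} are the n-th roots of unity. -/

import Mathlib

open Finset

/-- Reindexing a sum over `range n` by a cyclic shift. -/
lemma sum_shift_mod {M : Type*} [AddCommMonoid M] (n i : ℕ) (hi : i < n) (G : ℕ → M) :
    ∑ j ∈ Finset.range n, G ((i + j) % n) = ∑ r ∈ Finset.range n, G r := by
  have hn : 0 < n := lt_of_le_of_lt (Nat.zero_le i) hi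
  refine Finset.sum_nbij' (fun j => (i + j) % n) (fun r => (r + (n - i)) % n) ?_ ?_ ?_ ?_ ?_
  · intro j hj; exact Finset.mem_range.mpr (Nat.mod_lt _ hn)
  · intro r hr; exact Finset.mem_range.mpr (Nat.mod_lt _ hn)
  · intro j hj
    rw [Finset.mem_range] at hj
    show ((i + j) % n + (n - i)) % n = j
    have h1 : ((i + j) % n + (n - i)) % n = ((i + j) + (n - i)) % n :=
      Nat.ModEq.add_right _ (Nat.mod_modEq _ n)
    have h2 : (i + j) + (n - i) = n + j := by omega
    rw [h1, h2, Nat.add_mod_left, Nat.mod_eq_of_lt hj]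
  · intro r hr
    rw [Finset.mem_range] at hr
    show (i + ((r + (n - i)) % n)) % n = r
    have h1 : (i + (r + (n - i)) % n) % n = (i + (r + (n - i))) % n :=
      Nat.ModEq.add_left _ (Nat.mod_modEq _ n)
    have h2 : i + (r + (n - i)) = n + r := by omega
    rw [h1, h2, Nat.add_mod_left, Nat.mod_eq_of_lt hr]
  · intro j hj; rfl

lemma nat_half_succ (m : ℕ) : (m + 1) * m / 2 = m * (m - 1) / 2 + m := by
  match m with
  | 0 => simp
  | m + 1 =>
    have h : (m + 1 + 1) * (m + 1) = (m + 1) * m + (m + 1) * 2 := by ring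
    rw [h, Nat.add_mul_div_right _ _ (by norm_num : (0:ℕ) < 2)]
    simp

theorem det_leftCirculant (n : ℕ) (a : ℕ → ℂ)
    (A : Matrix (Fin n) (Fin n) ℂ) (hA : ∀ i j : Fin n, A i j = a ((i.val + j.val) % n)) :
    A.det = (-1 : ℂ) ^ ((n - 1) * (n - 2) / 2) *
      ∏ l ∈ Finset.range n, ∑ r ∈ Finset.range n,
        a r * Complex.exp (2 * Real.pi * Complex.I * l / n) ^ r := by
  rcases Nat.eq_zero_or_pos n with hn | hn
  · subst hn
    simp [Matrix.det_isEmpty]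
  have hnne : n ≠ 0 := hn.ne'
  have hn' : (n : ℂ) ≠ 0 := Nat.cast_ne_zero.mpr hnne
  set ω : ℂ := Complex.exp (2 * Real.pi * Complex.I / n) with hωdef
  have hprim : IsPrimitiveRoot ω n := Complex.isPrimitiveRoot_exp n hnne
  have hω1 : ω ^ n = 1 := hprim.pow_eq_one
  have hωne : ω ≠ 0 := Complex.exp_ne_zero _
  have hmod : ∀ x : ℕ, ω ^ (x % n) = ω ^ x := by
    intro x
    conv_rhs => rw [← Nat.div_add_mod x n]
    rw [pow_add, pow_mul, hω1, one_pow, one_mul]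
  have hθ : ∀ l : ℕ, Complex.exp (2 * Real.pi * Complex.I * l / n) = ω ^ l := by
    intro l
    rw [hωdef, ← Complex.exp_nat_mul]
    congr 1
    ring
  -- setup matrices
  set v : Fin n → ℂ := fun j => ω ^ (j : ℕ) with hvdef
  set u : Fin n → ℂ := fun i => ω ^ (n - (i : ℕ)) with hudef
  set F : ℕ → ℂ := fun l => ∑ r ∈ Finset.range n, a r * (ω ^ r) ^ l with hFdef
  set V := Matrix.vandermonde v with hVdef
  set E := Matrix.vandermonde u with hEdef
  set D := Matrix.diagonal (fun l : Fin n => F l.val) with hDdef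
  -- key matrix identity
  have hAV : A * V = E * D := by
    ext i l
    rw [Matrix.mul_apply, Matrix.mul_diagonal]
    have hEil : E i l = (ω ^ (n - (i : ℕ))) ^ (l : ℕ) := rfl
    have hstep : ∀ j : Fin n, A i j * V j l
        = (ω ^ (n - (i : ℕ))) ^ (l : ℕ) *
          (a (((i : ℕ) + (j : ℕ)) % n) * (ω ^ (((i : ℕ) + (j : ℕ)) % n)) ^ (l : ℕ)) := by
      intro j
      have hVjl : V j l = (ω ^ (j : ℕ)) ^ (l : ℕ) := rfl
      have hmul : ω ^ (n - (i : ℕ)) * ω ^ (((i : ℕ) + (j : ℕ)) % n) = ω ^ (j : ℕ) := by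
        rw [← pow_add]
        have h1 : ((n - (i : ℕ)) + ((i : ℕ) + (j : ℕ)) % n) % n
            = ((n - (i : ℕ)) + ((i : ℕ) + (j : ℕ))) % n :=
          Nat.ModEq.add_left _ (Nat.mod_modEq _ n)
        have h2 : (n - (i : ℕ)) + ((i : ℕ) + (j : ℕ)) = n + (j : ℕ) := by
          have := i.isLt; omega
        have h3 : ((n - (i : ℕ)) + ((i : ℕ) + (j : ℕ)) % n) % n = (j : ℕ) % n := by
          rw [h1, h2, Nat.add_mod_left]
        calc ω ^ ((n - (i : ℕ)) + ((i : ℕ) + (j : ℕ)) % n)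
            = ω ^ (((n - (i : ℕ)) + ((i : ℕ) + (j : ℕ)) % n) % n) := (hmod _).symm
          _ = ω ^ ((j : ℕ) % n) := by rw [h3]
          _ = ω ^ (j : ℕ) := hmod _
      rw [hA, hVjl, ← hmul, mul_pow]
      ring
    calc (∑ j : Fin n, A i j * V j l)
        = ∑ j : Fin n, (ω ^ (n - (i : ℕ))) ^ (l : ℕ) *
            (a (((i : ℕ) + (j : ℕ)) % n) * (ω ^ (((i : ℕ) + (j : ℕ)) % n)) ^ (l : ℕ)) :=
          Finset.sum_congr rfl fun j _ => hstep j
      _ = (ω ^ (n - (i : ℕ))) ^ (l : ℕ) *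
            ∑ j : Fin n, (a (((i : ℕ) + (j : ℕ)) % n) * (ω ^ (((i : ℕ) + (j : ℕ)) % n)) ^ (l : ℕ)) := by
          rw [Finset.mul_sum]
      _ = (ω ^ (n - (i : ℕ))) ^ (l : ℕ) *
            ∑ j ∈ Finset.range n, (a (((i : ℕ) + j) % n) * (ω ^ (((i : ℕ) + j) % n)) ^ (l : ℕ)) := by
          rw [Fin.sum_univ_eq_sum_range (fun j => a (((i : ℕ) + j) % n) * (ω ^ (((i : ℕ) + j) % n)) ^ (l : ℕ)) n]
      _ = (ω ^ (n - (i : ℕ))) ^ (l : ℕ) * F (l : ℕ) := by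
          rw [hFdef]
          congr 1
          exact sum_shift_mod n (i : ℕ) i.isLt (fun r => a r * (ω ^ r) ^ (l : ℕ))
      _ = E i l * F (l : ℕ) := by rw [hEil]
  -- the constant
  have hhalf : ω ^ (n * (n - 1) / 2) = (-1 : ℂ) ^ (n - 1) := by
    have heven : 2 ∣ n * (n - 1) := by
      rcases Nat.even_or_odd n with h | h
      · exact Dvd.dvd.mul_right h.two_dvd _
      · exact Dvd.dvd.mul_left (Nat.Odd.sub_odd h odd_one).two_dvd _
    have h2 : (n * (n - 1) / 2) * 2 = n * (n - 1) := Nat.div_mul_cancel heven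
    rw [hωdef, ← Complex.exp_nat_mul]
    have hcast : ((n * (n - 1) / 2 : ℕ) : ℂ) * (2 * Real.pi * Complex.I / n)
        = ((n - 1 : ℕ) : ℂ) * (Real.pi * Complex.I) := by
      have hc : ((n * (n - 1) / 2 : ℕ) : ℂ) * 2 = (n : ℂ) * ((n - 1 : ℕ) : ℂ) := by
        have := congrArg (fun x : ℕ => (x : ℂ)) h2
        push_cast at this ⊢
        exact this
      calc ((n * (n - 1) / 2 : ℕ) : ℂ) * (2 * Real.pi * Complex.I / n)
          = (((n * (n - 1) / 2 : ℕ) : ℂ) * 2) * (Real.pi * Complex.I) / n := by ring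
        _ = ((n : ℂ) * ((n - 1 : ℕ) : ℂ)) * (Real.pi * Complex.I) / n := by rw [hc]
        _ = ((n - 1 : ℕ) : ℂ) * (Real.pi * Complex.I) := by
            field_simp
    rw [hcast, Complex.exp_nat_mul, Complex.exp_pi_mul_I]
  have hdetE : E.det = (-1 : ℂ) ^ ((n - 1) * (n - 2) / 2) * V.det := by
    rw [hEdef, hVdef, Matrix.det_vandermonde, Matrix.det_vandermonde]
    set H : Fin n → ℂ := fun x => Complex.I * ω ^ (n - (x : ℕ)) with hHdef
    have hpair : ∀ i j : Fin n, u j - u i = (H i * H j) * (v j - v i) := by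
      intro i j
      have hij : (n - (i : ℕ)) + (n - (j : ℕ)) + (i : ℕ) = n + (n - (j : ℕ)) := by
        have := i.isLt; have := j.isLt; omega
      have hji : (n - (i : ℕ)) + (n - (j : ℕ)) + (j : ℕ) = n + (n - (i : ℕ)) := by
        have := i.isLt; have := j.isLt; omega
      have e1 : ω ^ (n - (i : ℕ)) * ω ^ (n - (j : ℕ)) * ω ^ (i : ℕ) = ω ^ (n - (j : ℕ)) := by
        rw [← pow_add, ← pow_add, hij, pow_add, hω1, one_mul]
      have e2 : ω ^ (n - (i : ℕ)) * ω ^ (n - (j : ℕ)) * ω ^ (j : ℕ) = ω ^ (n - (i : ℕ)) := by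
        rw [← pow_add, ← pow_add, hji, pow_add, hω1, one_mul]
      have hI : (Complex.I * ω ^ (n - (i : ℕ))) * (Complex.I * ω ^ (n - (j : ℕ)))
          = -(ω ^ (n - (i : ℕ)) * ω ^ (n - (j : ℕ))) := by
        have := Complex.I_mul_I
        ring_nf
        linear_combination (ω ^ (n - (i : ℕ)) * ω ^ (n - (j : ℕ))) * Complex.I_mul_I
      show ω ^ (n - (j : ℕ)) - ω ^ (n - (i : ℕ)) = _
      rw [hHdef]
      simp only []
      rw [hI]
      have : -(ω ^ (n - (i : ℕ)) * ω ^ (n - (j : ℕ))) * (ω ^ (j : ℕ) - ω ^ (i : ℕ))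
          = ω ^ (n - (i : ℕ)) * ω ^ (n - (j : ℕ)) * ω ^ (i : ℕ)
            - ω ^ (n - (i : ℕ)) * ω ^ (n - (j : ℕ)) * ω ^ (j : ℕ) := by ring
      rw [this, e1, e2]
    have hsplit : (∏ i : Fin n, ∏ j ∈ Finset.Ioi i, (u j - u i))
        = (∏ i : Fin n, ∏ j ∈ Finset.Ioi i, (H i * H j))
          * ∏ i : Fin n, ∏ j ∈ Finset.Ioi i, (v j - v i) := by
      rw [← Finset.prod_mul_distrib]
      refine Finset.prod_congr rfl fun i _ => ?_
      rw [← Finset.prod_mul_distrib]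
      exact Finset.prod_congr rfl fun j _ => hpair i j
    rw [hsplit]
    congr 1
    -- compute the constant product
    have hHne : ∀ x : Fin n, H x ≠ 0 := fun x =>
      mul_ne_zero Complex.I_ne_zero (pow_ne_zero _ hωne)
    set Q : ℂ := ∏ x : Fin n, H x with hQdef
    have hQne : Q ≠ 0 := Finset.prod_ne_zero_iff.mpr fun x _ => hHne x
    have hcompl : ∀ i : Fin n, ∏ j ∈ ({i}ᶜ : Finset (Fin n)), H j = Q / H i := by
      intro i
      rw [eq_div_iff (hHne i), hQdef, ← Finset.prod_singleton (f := H) (a := i),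
        Finset.prod_compl_mul_prod]
    have hQpow : (∏ i : Fin n, ∏ j ∈ Finset.Ioi i, (H i * H j)) = Q ^ (n - 1) := by
      calc (∏ i : Fin n, ∏ j ∈ Finset.Ioi i, (H i * H j))
          = ∏ i : Fin n, ∏ j ∈ Finset.Ioi i, (H j * H i) :=
            Finset.prod_congr rfl fun i _ => Finset.prod_congr rfl fun j _ => mul_comm _ _
        _ = ∏ i : Fin n, ∏ j ∈ ({i}ᶜ : Finset (Fin n)), H j := by
            have h := Finset.prod_prod_Ioi_mul_eq_prod_prod_off_diag (fun x _ : Fin n => H x)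
            convert h using 2
        _ = ∏ i : Fin n, Q / H i := Finset.prod_congr rfl fun i _ => hcompl i
        _ = Q ^ n / Q := by
            rw [Finset.prod_div_distrib, Finset.prod_const, Finset.card_univ,
              Fintype.card_fin, ← hQdef]
        _ = Q ^ (n - 1) := by
            have : Q ^ n = Q ^ (n - 1) * Q := by
              rw [← pow_succ]; congr 1; omega
            rw [this, mul_div_cancel_right₀ _ hQne]
    -- compute Q
    have hQval : Q = Complex.I ^ n * ((-1 : ℂ) ^ (n - 1)) := by
      rw [hQdef, hHdef]
      rw [Finset.prod_mul_distrib, Finset.prod_const, Finset.card_univ, Fintype.card_fin]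
      congr 1
      rw [Finset.prod_pow_eq_pow_sum]
      have hsum : (∑ x : Fin n, (n - (x : ℕ))) = n * (n - 1) / 2 + n := by
        rw [Fin.sum_univ_eq_sum_range (fun x => n - x) n]
        have h1 : ∑ j ∈ Finset.range n, (n - j) = ∑ j ∈ Finset.range n, (j + 1) := by
          have := Finset.sum_range_reflect (fun j => j + 1) n
          rw [← this]
          refine Finset.sum_congr rfl fun j hj => ?_
          rw [Finset.mem_range] at hj; omega
        rw [h1, Finset.sum_add_distrib, Finset.sum_const, Finset.card_range, smul_eq_mul,
          mul_one, Finset.sum_range_id]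
      rw [hsum, pow_add, hω1, mul_one, hhalf]
    -- final constant computation
    rw [hQpow, hQval]
    have hIpow : (Complex.I ^ n) ^ (n - 1) = (-1 : ℂ) ^ (n * (n - 1) / 2) := by
      have heven : 2 ∣ n * (n - 1) := by
        rcases Nat.even_or_odd n with h | h
        · exact Dvd.dvd.mul_right h.two_dvd _
        · exact Dvd.dvd.mul_left (Nat.Odd.sub_odd h odd_one).two_dvd _
      have hK2 : 2 * (n * (n - 1) / 2) = n * (n - 1) := by
        rw [mul_comm]; exact Nat.div_mul_cancel heven
      calc (Complex.I ^ n) ^ (n - 1) = Complex.I ^ (n * (n - 1)) := by rw [← pow_mul]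
        _ = Complex.I ^ (2 * (n * (n - 1) / 2)) := by rw [hK2]
        _ = (Complex.I ^ 2) ^ (n * (n - 1) / 2) := by rw [pow_mul]
        _ = (-1 : ℂ) ^ (n * (n - 1) / 2) := by rw [Complex.I_sq]
    rw [mul_pow, hIpow, ← pow_mul]
    -- now : (-1)^(n(n-1)/2) * (-1)^((n-1)*(n-1)) = (-1)^((n-1)(n-2)/2)
    obtain ⟨m, rfl⟩ : ∃ m, n = m + 1 := ⟨n - 1, by omega⟩
    simp only [Nat.add_sub_cancel]
    have e1 : (m + 1) * m / 2 = m * (m - 1) / 2 + m := nat_half_succ m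
    rw [e1, pow_add, mul_assoc, ← pow_add]
    have heven : Even (m + m * m) := by
      have : m + m * m = m * (m + 1) := by ring
      rw [this]; exact Nat.even_mul_succ_self m
    rw [heven.neg_one_pow, mul_one]
    have hms : m + 1 - 2 = m - 1 := rfl
    rw [hms]
  -- nonvanishing of V.det
  have hVne : V.det ≠ 0 := by
    rw [hVdef, Matrix.det_vandermonde_ne_zero_iff]
    intro x y hxy
    exact Fin.ext (hprim.pow_inj x.isLt y.isLt hxy)
  -- put it all together
  have hdet : A.det * V.det
      = ((-1 : ℂ) ^ ((n - 1) * (n - 2) / 2) * ∏ l ∈ Finset.range n, F l) * V.det := by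
    have h1 : (A * V).det = (E * D).det := by rw [hAV]
    rw [Matrix.det_mul, Matrix.det_mul, Matrix.det_diagonal] at h1
    rw [h1, hdetE]
    rw [Fin.prod_univ_eq_prod_range (fun l => F l) n]
    ring
  have hfinal := mul_right_cancel₀ hVne hdet
  rw [hfinal]
  congr 1
  refine Finset.prod_congr rfl fun l hl => ?_
  rw [hFdef]
  refine Finset.sum_congr rfl fun r hr => ?_
  rw [hθ l]
  rw [← pow_mul, ← pow_mul, mul_comm r l]
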